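/- Let P be a Lagrangian plane in ℝ⁴ and let π_P denote orthogonal projection onto P. Denote by X₁, Y₁, X₂, Y₂ the standard basis vectors corresponding to coordinates x₁, y₁, x₂, y₂. Then ⟨π_P X₁, π_P Y₂⟩ = ⟨π_P Y₁, π_P X₂⟩. -/

import Mathlib

/-- The standard symplectic form `ω = dx₁∧dy₁ + dx₂∧dy₂` on `ℝ⁴`, coordinates ordered
as `(x₁, y₁, x₂, y₂)`. -/
def omega4 (u v : EuclideanSpace ℝ (Fin 4)) : ℝ :=
  u 0 * v 1 - u 1 * v 0 + u 2 * v 3 - u 3 * v 2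

/-- The standard complex structure `J` on `ℝ⁴` as a linear equivalence. -/
noncomputable def Jmap : EuclideanSpace ℝ (Fin 4) ≃ₗ[ℝ] EuclideanSpace ℝ (Fin 4) where
  toFun u := WithLp.toLp 2 ![-u 1, u 0, -u 3, u 2]
  invFun u := WithLp.toLp 2 ![u 1, -u 0, u 3, -u 2]
  map_add' u v := by
    ext i
    fin_cases i <;> simp [PiLp.add_apply] <;> ring
  map_smul' c u := by
    ext i
    fin_cases i <;> simp [PiLp.smul_apply]
  left_inv u := by
    ext i
    fin_cases i <;> simp
  right_inv u := by
    ext i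
    fin_cases i <;> simp

set_option maxHeartbeats 1000000 in
/-- For a Lagrangian plane `P ⊆ ℝ⁴` and the orthogonal projection `π_P` onto `P`, with
standard basis vectors `X₁, Y₁, X₂, Y₂` (coordinates `x₁, y₁, x₂, y₂`), one has
`⟨π_P X₁, π_P Y₂⟩ = ⟨π_P Y₁, π_P X₂⟩`. -/
theorem stmt12 (P : Submodule ℝ (EuclideanSpace ℝ (Fin 4)))
    (hdim : Module.finrank ℝ P = 2)
    (hLag : ∀ u ∈ P, ∀ v ∈ P, omega4 u v = 0) :
    @inner ℝ _ _
        ((Submodule.orthogonalProjectionOnto P (EuclideanSpace.single 0 (1 : ℝ)) : EuclideanSpace ℝ (Fin 4)))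
        ((Submodule.orthogonalProjectionOnto P (EuclideanSpace.single 3 (1 : ℝ)) : EuclideanSpace ℝ (Fin 4)))
      = @inner ℝ _ _
        ((Submodule.orthogonalProjectionOnto P (EuclideanSpace.single 1 (1 : ℝ)) : EuclideanSpace ℝ (Fin 4)))
        ((Submodule.orthogonalProjectionOnto P (EuclideanSpace.single 2 (1 : ℝ)) : EuclideanSpace ℝ (Fin 4))) := by
  set e0 : EuclideanSpace ℝ (Fin 4) := EuclideanSpace.single 0 (1 : ℝ) with he0
  set e1 : EuclideanSpace ℝ (Fin 4) := EuclideanSpace.single 1 (1 : ℝ) with he1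
  set e2 : EuclideanSpace ℝ (Fin 4) := EuclideanSpace.single 2 (1 : ℝ) with he2
  set e3 : EuclideanSpace ℝ (Fin 4) := EuclideanSpace.single 3 (1 : ℝ) with he3
  set a : EuclideanSpace ℝ (Fin 4) := (Submodule.orthogonalProjectionOnto P e0 : EuclideanSpace ℝ (Fin 4))
    with hadef
  set b : EuclideanSpace ℝ (Fin 4) := (Submodule.orthogonalProjectionOnto P e2 : EuclideanSpace ℝ (Fin 4))
    with hbdef
  have ha : a ∈ P := (Submodule.orthogonalProjectionOnto P e0).2
  have hb : b ∈ P := (Submodule.orthogonalProjectionOnto P e2).2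
  -- Step 1: reduce the goal to `a 3 = b 1`.
  have hL : @inner ℝ _ _ a ((Submodule.orthogonalProjectionOnto P e3 : EuclideanSpace ℝ (Fin 4))) = a 3 := by
    have h1 : @inner ℝ _ _ a (e3 - (Submodule.orthogonalProjectionOnto P e3 : EuclideanSpace ℝ (Fin 4))) = 0 :=
      (Submodule.sub_starProjection_mem_orthogonal (K := P) e3) a ha
    rw [inner_sub_right] at h1
    have h2 : @inner ℝ _ _ a e3 = a 3 := by
      rw [he3, EuclideanSpace.inner_single_right]; simp
    linarith [h1, h2]
  have hR : @inner ℝ _ _ ((Submodule.orthogonalProjectionOnto P e1 : EuclideanSpace ℝ (Fin 4))) b = b 1 := by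
    have h1 : @inner ℝ _ _ b (e1 - (Submodule.orthogonalProjectionOnto P e1 : EuclideanSpace ℝ (Fin 4))) = 0 :=
      (Submodule.sub_starProjection_mem_orthogonal (K := P) e1) b hb
    rw [inner_sub_right] at h1
    have h2 : @inner ℝ _ _ b e1 = b 1 := by
      rw [he1, EuclideanSpace.inner_single_right]; simp
    rw [real_inner_comm]
    linarith [h1, h2]
  rw [hL, hR]
  -- Step 2: J(P) = Pᗮ.
  have hJP : P.map (Jmap : EuclideanSpace ℝ (Fin 4) →ₗ[ℝ] EuclideanSpace ℝ (Fin 4)) = Pᗮ := by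
    apply Submodule.eq_of_le_of_finrank_eq
    · rintro _ ⟨u, hu, rfl⟩
      rw [Submodule.mem_orthogonal]
      intro v hv
      have hω := hLag u hu v hv
      simp only [omega4] at hω
      have hJu : ((Jmap : EuclideanSpace ℝ (Fin 4) →ₗ[ℝ] _) u)
          = (show EuclideanSpace ℝ (Fin 4) from WithLp.toLp 2 ![-u 1, u 0, -u 3, u 2]) := rfl
      rw [real_inner_comm, hJu, PiLp.inner_apply]
      simp only [RCLike.inner_apply, conj_trivial, Fin.sum_univ_four]
      show v 0 * (![-u 1, u 0, -u 3, u 2] : Fin 4 → ℝ) 0 +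
        v 1 * (![-u 1, u 0, -u 3, u 2] : Fin 4 → ℝ) 1 +
        v 2 * (![-u 1, u 0, -u 3, u 2] : Fin 4 → ℝ) 2 +
        v 3 * (![-u 1, u 0, -u 3, u 2] : Fin 4 → ℝ) 3 = 0
      simp only [Matrix.cons_val_zero, Matrix.cons_val_one, Matrix.head_cons,
        Matrix.cons_val_two, Matrix.tail_cons, Matrix.cons_val_three]
      linarith [hω]
    · rw [LinearEquiv.finrank_map_eq]
      have h4 : Module.finrank ℝ (EuclideanSpace ℝ (Fin 4)) = 4 := finrank_euclideanSpace_fin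
      have hsum := Submodule.finrank_add_finrank_orthogonal P
      omega
  -- Step 3: find w ∈ P with J w = e2 - b.
  have hmem : e2 - b ∈ Pᗮ := Submodule.sub_starProjection_mem_orthogonal e2
  rw [← hJP] at hmem
  obtain ⟨w, hwP, hw⟩ := hmem
  have hw0 : w 0 = -b 1 := by
    have h : w 0 = (e2 - b) 1 := congrArg (fun (x : EuclideanSpace ℝ (Fin 4)) => x 1) hw
    simpa [he2, PiLp.sub_apply, EuclideanSpace.single_apply] using h
  have hw1 : w 1 = b 0 := by
    have h : -w 1 = (e2 - b) 0 := congrArg (fun (x : EuclideanSpace ℝ (Fin 4)) => x 0) hw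
    simp [he2, PiLp.sub_apply, EuclideanSpace.single_apply] at h
    linarith
  have hw2 : w 2 = -b 3 := by
    have h : w 2 = (e2 - b) 3 := congrArg (fun (x : EuclideanSpace ℝ (Fin 4)) => x 3) hw
    simpa [he2, PiLp.sub_apply, EuclideanSpace.single_apply] using h
  have hw3 : w 3 = b 2 - 1 := by
    have h : -w 3 = (e2 - b) 2 := congrArg (fun (x : EuclideanSpace ℝ (Fin 4)) => x 2) hw
    simp [he2, PiLp.sub_apply, EuclideanSpace.single_apply] at h
    linarith
  -- Step 4: orthogonality relation ⟨e0 - a, w⟩ = 0.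
  have hperp : @inner ℝ _ _ (e0 - a) w = 0 := by
    rw [real_inner_comm]
    exact (Submodule.mem_orthogonal _ _).1
      (Submodule.sub_starProjection_mem_orthogonal (K := P) e0) w hwP
  have hperp' : (e0 - a) 0 * w 0 + (e0 - a) 1 * w 1 + (e0 - a) 2 * w 2 + (e0 - a) 3 * w 3 = 0 := by
    rw [← hperp, PiLp.inner_apply]
    simp [Fin.sum_univ_four]
    ring
  have hcoord : ∀ i : Fin 4, (e0 - a) i = (if i = 0 then 1 else 0) - a i := by
    intro i
    simp [he0, PiLp.sub_apply, EuclideanSpace.single_apply]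
  rw [hcoord 0, hcoord 1, hcoord 2, hcoord 3] at hperp'
  norm_num [show ((1:Fin 4) ≠ 0) from by decide, show ((2:Fin 4) ≠ 0) from by decide,
    show ((3:Fin 4) ≠ 0) from by decide] at hperp'
  -- Step 5: the Lagrangian condition on a, b.
  have hω : omega4 a b = 0 := hLag a ha b hb
  simp only [omega4] at hω
  -- Conclude.
  rw [hw0, hw1, hw2, hw3] at hperp'
  nlinarith [hperp', hω]
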